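/- Define s(n) = Σ_{k=0}^{n} A(n,k), the sum of row n of the binary binomial interpolated triangle. Then for all n ≥ 4: s(n) = (α+𝓐)s(n-1) + (β − α𝓐 + 𝓑)s(n-2) − (α𝓑 + β𝓐)s(n-3) − β𝓑·s(n-4), where 𝓐 = uα+2v and 𝓑 = u²β−uvα−v². -/

import Mathlib

theorem stmt_8 (u v α β : ℝ) (hu : u ≠ 0) (hv : v ≠ 0) (hα : α ≠ 0) (hβ : β ≠ 0)
    (a : ℕ → ℝ) (ha : ∀ n, 2 ≤ n → a n = α * a (n-1) + β * a (n-2))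
    (A : ℕ → ℕ → ℝ) (hA0 : ∀ n, A n 0 = a n)
    (hA : ∀ n k, 1 ≤ k → k ≤ n → A n k = u * A n (k-1) + v * A (n-1) (k-1))
    (s : ℕ → ℝ) (hs : ∀ n, s n = ∑ k ∈ Finset.range (n+1), A n k) :
    ∀ n, 4 ≤ n →
      s n = (α + (u*α + 2*v)) * s (n-1)
        + (β - α*(u*α + 2*v) + (u^2*β - u*v*α - v^2)) * s (n-2)
        - (α*(u^2*β - u*v*α - v^2) + β*(u*α + 2*v)) * s (n-3)
        - β*(u^2*β - u*v*α - v^2) * s (n-4) := by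
  -- Lemma L : recurrence in the first index, valid when k + 2 ≤ n.
  have L : ∀ k m, A (m + k + 2) k = α * A (m + k + 1) k + β * A (m + k) k := by
    intro k
    induction k with
    | zero =>
      intro m
      simp only [Nat.add_zero, hA0]
      have := ha (m + 2) (by omega)
      simpa using this
    | succ k ih =>
      intro m
      show A (m + k + 3) (k+1) = α * A (m + k + 2) (k+1) + β * A (m + k + 1) (k+1)
      have h1 : A (m + k + 3) (k+1) = u * A (m + k + 3) k + v * A (m + k + 2) k :=
        hA (m + k + 3) (k+1) (by omega) (by omega)
      have h2 : A (m + k + 2) (k+1) = u * A (m + k + 2) k + v * A (m + k + 1) k :=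
        hA (m + k + 2) (k+1) (by omega) (by omega)
      have h3 : A (m + k + 1) (k+1) = u * A (m + k + 1) k + v * A (m + k) k :=
        hA (m + k + 1) (k+1) (by omega) (by omega)
      have i1 : A (m + k + 3) k = α * A (m + k + 2) k + β * A (m + k + 1) k := by
        have h := ih (m + 1)
        have ea : m + 1 + k + 2 = m + k + 3 := by omega
        have eb : m + 1 + k + 1 = m + k + 2 := by omega
        have ec : m + 1 + k = m + k + 1 := by omega
        rw [ea, eb, ec] at h
        exact h
      have i2 : A (m + k + 2) k = α * A (m + k + 1) k + β * A (m + k) k := ih m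
      rw [h1, h2, h3, i1, i2]; ring
  -- convenient form
  have Lfin : ∀ m k, k ≤ m → A (m + 2) k = α * A (m + 1) k + β * A m k := by
    intro m k hk
    have h := L k (m - k)
    have e : m - k + k = m := Nat.sub_add_cancel hk
    rw [e] at h
    exact h
  -- Lemma T : the row-sum difference collapses to boundary terms.
  have T : ∀ m, s (m + 2) - α * s (m + 1) - β * s m
      = A (m+2) (m+2) + A (m+2) (m+1) - α * A (m+1) (m+1) := by
    intro m
    have hsum : ∑ k ∈ Finset.range (m+1), A (m+2) k
        = α * ∑ k ∈ Finset.range (m+1), A (m+1) k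
          + β * ∑ k ∈ Finset.range (m+1), A m k := by
      rw [Finset.mul_sum, Finset.mul_sum, ← Finset.sum_add_distrib]
      exact Finset.sum_congr rfl fun k hk =>
        Lfin m k (by simpa [Nat.lt_succ_iff] using hk)
    have e2 : s (m+2) = (∑ k ∈ Finset.range (m+1), A (m+2) k)
        + A (m+2) (m+1) + A (m+2) (m+2) := by
      rw [hs (m+2)]
      rw [Finset.sum_range_succ, Finset.sum_range_succ]
    have e1 : s (m+1) = (∑ k ∈ Finset.range (m+1), A (m+1) k) + A (m+1) (m+1) := by
      rw [hs (m+1), Finset.sum_range_succ]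
    have e0 : s m = ∑ k ∈ Finset.range (m+1), A m k := hs m
    rw [e2, e1, e0, hsum]; ring
  -- Diagonal and subdiagonal recurrences.
  have Drec : ∀ m, A (m+1) (m+1) = u * A (m+1) m + v * A m m := by
    intro m
    have := hA (m+1) (m+1) (by omega) (by omega)
    simpa using this
  have Erec : ∀ m, A (m+2) (m+1)
      = (u*α + v) * A (m+1) m + u*β * A m m := by
    intro m
    have h1 : A (m+2) (m+1) = u * A (m+2) m + v * A (m+1) m := by
      have := hA (m+2) (m+1) (by omega) (by omega)
      simpa using this
    have h2 : A (m+2) m = α * A (m+1) m + β * A m m := Lfin m m le_rfl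
    rw [h1, h2]; ring
  intro n hn
  obtain ⟨m, rfl⟩ : ∃ m, n = m + 4 := ⟨n - 4, by omega⟩
  have ht4 := T (m+2)
  have ht3 := T (m+1)
  have ht2 := T m
  have d1 := Drec (m+3)
  have d2 := Drec (m+2)
  have d3 := Drec (m+1)
  have e1 := Erec (m+2)
  have e2 := Erec (m+1)
  have idx1 : m + 4 - 1 = m + 3 := rfl
  have idx2 : m + 4 - 2 = m + 2 := rfl
  have idx3 : m + 4 - 3 = m + 1 := rfl
  have idx4 : m + 4 - 4 = m := rfl
  rw [idx1, idx2, idx3, idx4]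
  have eq1 : m + 2 + 2 = m + 4 := by omega
  have eq2 : m + 1 + 2 = m + 3 := by omega
  have eq3 : m + 3 + 1 = m + 4 := by omega
  have eq4 : m + 2 + 1 = m + 3 := by omega
  have eq5 : m + 1 + 1 = m + 2 := by omega
  rw [eq1] at ht4
  rw [eq2] at ht3
  rw [eq3] at d1
  rw [eq4] at d2 e1
  rw [eq5] at d3 e2
  linear_combination ht4 - (u*α + 2*v) * ht3 - (u^2*β - u*v*α - v^2) * ht2
    + d1 + (u + 1) * e1 + (v - α - (u*α + 2*v)) * d2 - (u*α + v) * e2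
    + (u*β + u*α^2 + v*α) * d3
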